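/- Let λ: R → S be a ring epimorphism. Then the essential image of restriction of scalars, i.e. the full subcategory of Mod R consisting of modules whose R-action extends to an S-action, is closed under products, coproducts, kernels and cokernels in Mod R. -/

import Mathlib

open DirectSum

universe u

/-- A ring homomorphism is an epimorphism in the category of rings. -/
def IsRingEpi {R S : Type u} [Ring R] [Ring S] (f : R →+* S) : Prop :=
  ∀ ⦃T : Type u⦄ [Ring T], ∀ g h : S →+* T, g.comp f = h.comp f → g = h

/-- An `R`-module `X` lies in the essential image of restriction of scalars along
`f : R →+* S` iff its `R`-action extends to an `S`-action compatible with `f`. -/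
def ExtendsAlong {R S : Type u} [Ring R] [Ring S] (f : R →+* S)
    (X : Type u) [AddCommGroup X] [Module R X] : Prop :=
  ∃ m : Module S X, ∀ (r : R) (x : X), (letI : Module S X := m; f r • x) = r • x

/-- If `f` is a ring epimorphism, any additive `R`-linear map between `S`-modules whose
actions are compatible with `f` is automatically `S`-linear. -/
lemma key_smul {R S : Type u} [Ring R] [Ring S] (f : R →+* S) (hf : IsRingEpi f)
    {M N : Type u} [AddCommGroup M] [AddCommGroup N]
    [Module S M] [Module S N] [Module R M] [Module R N]
    (hM : ∀ (r : R) (x : M), f r • x = r • x)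
    (hN : ∀ (r : R) (x : N), f r • x = r • x)
    (g : M →+ N) (hg : ∀ (r : R) (x : M), g (r • x) = r • g x)
    (s : S) (x : M) : g (s • x) = s • g x := by
  let φ : S →+* AddMonoid.End (M × N) := Module.toAddMonoidEnd S (M × N)
  have hφ : ∀ (a : S) (p : M × N), φ a p = (a • p.1, a • p.2) := fun _ _ => rfl
  let ψfun : S → AddMonoid.End (M × N) := fun s =>
    { toFun := fun p => (s • p.1, s • p.2 + g (s • p.1) - s • g p.1)
      map_zero' := by simp
      map_add' := by
        intro p q
        refine Prod.ext ?_ ?_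
        · simp [smul_add]
        · simp [smul_add, map_add]
          abel }
  have hψ : ∀ (a : S) (p : M × N),
      ψfun a p = (a • p.1, a • p.2 + g (a • p.1) - a • g p.1) := fun _ _ => rfl
  let ψ : S →+* AddMonoid.End (M × N) :=
    { toFun := ψfun
      map_one' := by
        refine AddMonoid.End.ext _ fun p => ?_
        simp only [hψ, one_smul]
        refine Prod.ext rfl ?_
        show p.2 + g p.1 - g p.1 = p.2
        simp
      map_mul' := by
        intro a b
        refine AddMonoid.End.ext _ fun p => ?_
        have : (ψfun a * ψfun b) p = ψfun a (ψfun b p) := rfl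
        rw [this, hψ, hψ, hψ]
        refine Prod.ext ?_ ?_
        · simp [mul_smul]
        · simp [mul_smul, smul_add, smul_sub, map_add, map_sub]
          abel
      map_zero' := by
        refine AddMonoid.End.ext _ fun p => ?_
        rw [hψ]
        refine Prod.ext ?_ ?_ <;> simp
      map_add' := by
        intro a b
        refine AddMonoid.End.ext _ fun p => ?_
        have : (ψfun a + ψfun b) p = ψfun a p + ψfun b p := rfl
        rw [this, hψ, hψ, hψ]
        refine Prod.ext ?_ ?_
        · simp [add_smul]
        · simp [add_smul, map_add]
          abel }
  have hcomp : φ.comp f = ψ.comp f := by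
    refine RingHom.ext fun r => AddMonoid.End.ext _ fun p => ?_
    have h1 : (φ.comp f) r p = (f r • p.1, f r • p.2) := rfl
    have h2 : (ψ.comp f) r p = (f r • p.1, f r • p.2 + g (f r • p.1) - f r • g p.1) := rfl
    rw [h1, h2]
    simp only [hM, hN]
    rw [hg]
    simp
  have h := hf φ ψ hcomp
  have h2 := congrArg (fun (e : S →+* AddMonoid.End (M × N)) => (e s (x, 0)).2) h
  have h3 : (φ s (x, 0)).2 = ((ψ : S →+* AddMonoid.End (M × N)) s (x, 0)).2 := h2
  rw [hφ] at h3
  have h4 : ((ψ : S →+* AddMonoid.End (M × N)) s (x, 0)).2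
      = s • (0 : N) + g (s • x) - s • g x := rfl
  rw [h4] at h3
  simp only [smul_zero, zero_add] at h3
  exact sub_eq_zero.mp h3.symm

/-- Let `λ : R → S` be a ring epimorphism. The essential image of restriction of scalars
(modules whose `R`-action extends to an `S`-action) is closed under products,
coproducts, kernels and cokernels in `Mod R`. -/
theorem essImage_bireflective {R S : Type u} [Ring R] [Ring S] (f : R →+* S)
    (hf : IsRingEpi f) :
    (∀ (ι : Type u) (X : ι → Type u) [∀ i, AddCommGroup (X i)] [∀ i, Module R (X i)],
        (∀ i, ExtendsAlong f (X i)) → ExtendsAlong f (∀ i, X i)) ∧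
    (∀ (ι : Type u) [DecidableEq ι] (X : ι → Type u) [∀ i, AddCommGroup (X i)]
        [∀ i, Module R (X i)],
        (∀ i, ExtendsAlong f (X i)) → ExtendsAlong f (⨁ i, X i)) ∧
    (∀ (X Y : Type u) [AddCommGroup X] [AddCommGroup Y] [Module R X] [Module R Y],
        ExtendsAlong f X → ExtendsAlong f Y → ∀ g : X →ₗ[R] Y,
          ExtendsAlong f ↥(LinearMap.ker g) ∧ ExtendsAlong f (Y ⧸ LinearMap.range g)) := by
  refine ⟨?_, ?_, ?_⟩
  · -- products
    intro ι X _ _ h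
    letI : ∀ i, Module S (X i) := fun i => (h i).choose
    refine ⟨inferInstance, fun r x => funext fun i => ?_⟩
    exact (h i).choose_spec r (x i)
  · -- coproducts
    intro ι _ X _ _ h
    letI : ∀ i, Module S (X i) := fun i => (h i).choose
    refine ⟨inferInstance, fun r x => ?_⟩
    refine DFinsupp.ext fun i => ?_
    rw [DFinsupp.smul_apply, DFinsupp.smul_apply]
    exact (h i).choose_spec r (x i)
  · -- kernels and cokernels
    intro X Y _ _ _ _ hX hY g
    obtain ⟨mX, hmX⟩ := hX
    obtain ⟨mY, hmY⟩ := hY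
    letI := mX; letI := mY
    have hsl : ∀ (s : S) (x : X), g (s • x) = s • g x :=
      key_smul f hf hmX hmY g.toAddMonoidHom (fun r x => g.map_smul r x)
    constructor
    · -- kernel
      letI : SMul S ↥(LinearMap.ker g) := ⟨fun s x => ⟨s • x.1, by
        have hx : g x.1 = 0 := x.2
        have : g (s • x.1) = s • g x.1 := hsl s x.1
        simp [LinearMap.mem_ker, this, hx]⟩⟩
      letI : Module S ↥(LinearMap.ker g) :=
        Function.Injective.module S ((LinearMap.ker g).subtype.toAddMonoidHom)
          Subtype.coe_injective (fun _ _ => rfl)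
      refine ⟨inferInstance, fun r x => ?_⟩
      apply Subtype.ext
      show f r • x.1 = ((r • x : ↥(LinearMap.ker g)) : X)
      rw [hmX]
      rfl
    · -- cokernel
      letI : SMul S (Y ⧸ LinearMap.range g) := ⟨fun s => Quotient.map' (fun y => s • y)
        (fun a b hab => by
          rw [Submodule.quotientRel_def] at hab ⊢
          obtain ⟨t, ht⟩ := hab
          exact ⟨s • t, by rw [hsl, ht, smul_sub]⟩)⟩
      have smul_mk : ∀ (s : S) (y : Y),
          s • (Submodule.Quotient.mk y : Y ⧸ LinearMap.range g)
            = Submodule.Quotient.mk (s • y) := fun _ _ => rfl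
      letI : Module S (Y ⧸ LinearMap.range g) :=
        Function.Surjective.module S ((LinearMap.range g).mkQ.toAddMonoidHom)
          (Submodule.Quotient.mk_surjective _) (fun s y => (smul_mk s y).symm)
      refine ⟨inferInstance, fun r q => ?_⟩
      obtain ⟨y, rfl⟩ := Submodule.Quotient.mk_surjective _ q
      rw [smul_mk, hmY, Submodule.Quotient.mk_smul]
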